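/- arXiv:1505.07787 — 6 statements merged into one kernel-verified Lean document; each statement's English description precedes it below -/
import Mathlib

section
/- Let (C,δ,P) be a chain complex with involution over Z_D, V ≤ C a subspace with direct complement V^> such that the projection W onto V (along V^>) commutes with P. Let S^> = Wδ(V^>) and V' = V/S^>, and let φ : C → V' send h to Wh + S^>. Then the maps δ'(x+S^>) = φ(δx) and P'(x+S^>) = φ(Px) are well defined. -/
/-- In the reduced complex construction, the maps
`δ'(x+S^>) = φ(δx)` and `P'(x+S^>) = φ(Px)` are well defined: if two elements have
the same image under `φ = (W · + S^>)`, then so do their images under `δ` and `P`. -/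
theorem reduced_maps_well_defined
    {D : ℕ} (hD : D.Prime) (hDodd : Odd D)
    {C : Type*} [AddCommGroup C] [Module (ZMod D) C]
    (δ P W : C →ₗ[ZMod D] C) (V Vc : Submodule (ZMod D) C)
    (hδ : δ ∘ₗ δ = 0) (hP : P ∘ₗ P = LinearMap.id)
    (hanti : δ ∘ₗ P + P ∘ₗ δ = 0)
    (hcompl : IsCompl V Vc)
    (hWV : ∀ x ∈ V, W x = x) (hWVc : ∀ x ∈ Vc, W x = 0)
    (hWP : W ∘ₗ P = P ∘ₗ W)
    (S : Submodule (ZMod D) C) (hS : S = Submodule.map (W ∘ₗ δ) Vc) :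
    ∀ x y : C, W x - W y ∈ S →
      (W (δ x) - W (δ y) ∈ S ∧ W (P x) - W (P y) ∈ S) := by
  subst hS
  have hdec : ∀ c : C, c - W c ∈ Vc := by
    intro c
    have hc : c ∈ V ⊔ Vc := by rw [hcompl.sup_eq_top]; trivial
    obtain ⟨v, hv, vc, hvc, rfl⟩ := Submodule.mem_sup.mp hc
    have hW : W (v + vc) = v := by
      rw [map_add, hWV v hv, hWVc vc hvc, add_zero]
    simpa [hW] using hvc
  have hker : ∀ c : C, W c = 0 → c ∈ Vc := by
    intro c h
    simpa [h] using hdec c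
  have hδδ : ∀ c : C, δ (δ c) = 0 := fun c => DFunLike.congr_fun hδ c
  have hWPc : ∀ c : C, W (P c) = P (W c) := fun c => DFunLike.congr_fun hWP c
  have hPδ : ∀ c : C, P (δ c) = -δ (P c) := by
    intro c
    have h := DFunLike.congr_fun hanti c
    simp only [LinearMap.add_apply, LinearMap.comp_apply, LinearMap.zero_apply] at h
    exact eq_neg_of_add_eq_zero_right h
  intro x y hxy
  set d := x - y with hd
  have hWd : W d ∈ Submodule.map (W ∘ₗ δ) Vc := by
    simpa [hd, map_sub] using hxy
  obtain ⟨u, hu, hWu⟩ := hWd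
  simp only [LinearMap.comp_apply] at hWu
  have hδd : W (δ x) - W (δ y) = W (δ d) := by simp [hd, map_sub]
  have hPd : W (P x) - W (P y) = W (P d) := by simp [hd, map_sub]
  constructor
  · rw [hδd]
    -- split d = W d + (d - W d)
    have hdd : d = W d + (d - W d) := by abel
    have hsplit : W (δ d) = W (δ (W d)) + W (δ (d - W d)) := by
      conv_lhs => rw [hdd]
      rw [map_add, map_add]
    rw [hsplit]
    apply Submodule.add_mem
    · -- W d = W (δ u); δ (W δ u) = δ (δ u - w) = -δ w with w = δ u - W (δ u) ∈ Vc
      have hw : δ u - W (δ u) ∈ Vc := hdec (δ u)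
      have : W (δ (W d)) = W (δ (-(δ u - W (δ u)))) := by
        rw [← hWu]
        congr 1
        rw [map_neg, map_sub, hδδ u, zero_sub, neg_neg]
      rw [this]
      exact ⟨-(δ u - W (δ u)), Submodule.neg_mem _ hw, rfl⟩
    · exact ⟨d - W d, hdec d, rfl⟩
  · rw [hPd]
    have hdd : d = W d + (d - W d) := by abel
    have hsplit : W (P d) = W (P (W d)) + W (P (d - W d)) := by
      conv_lhs => rw [hdd]
      rw [map_add, map_add]
    rw [hsplit]
    have h2 : W (P (d - W d)) = 0 := by
      rw [hWPc, hWVc _ (hdec d), map_zero]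
    rw [h2, add_zero]
    -- W (P (W d)) = W (P (W δ u)) = W (W (P (δ u)))? use commutation
    have hPu : P u ∈ Vc := hker _ (by rw [hWPc, hWVc u hu, map_zero])
    have : W (P (W d)) = W (δ (-(P u))) := by
      have hWW : ∀ c : C, W (W c) = W c := by
        intro c
        have h0 := hWVc _ (hdec c)
        rw [map_sub] at h0
        rw [sub_eq_zero] at h0
        exact h0.symm
      rw [← hWu, hWPc, hWW, ← hWPc, hPδ]
      simp
    rw [this]
    exact ⟨-(P u), Submodule.neg_mem _ hPu, rfl⟩
end

section
/- In the setting of the reduced complex construction, ker δ' = φ(δ⁻¹(V^>)) and im δ' = φ(im δ). -/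
/-- In the reduced complex construction,
`ker δ' = φ(δ⁻¹(V^>))` and `im δ' = φ(im δ)`. -/
theorem reduced_complex_ker_im
    {D : ℕ} (hD : D.Prime) (hDodd : Odd D)
    {C : Type*} [AddCommGroup C] [Module (ZMod D) C]
    (δ P W : C →ₗ[ZMod D] C) (V Vc : Submodule (ZMod D) C)
    (hδ : δ ∘ₗ δ = 0) (hP : P ∘ₗ P = LinearMap.id)
    (hanti : δ ∘ₗ P + P ∘ₗ δ = 0)
    (hcompl : IsCompl V Vc)
    (hWV : ∀ x ∈ V, W x = x) (hWVc : ∀ x ∈ Vc, W x = 0)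
    (hWmem : ∀ x, W x ∈ V)
    (hWP : W ∘ₗ P = P ∘ₗ W)
    (SV : Submodule (ZMod D) V)
    (hSV : SV = (Submodule.map (W ∘ₗ δ) Vc).comap V.subtype)
    (φ : C →ₗ[ZMod D] (V ⧸ SV))
    (hφ : φ = SV.mkQ ∘ₗ LinearMap.codRestrict V W hWmem)
    (δ' : (V ⧸ SV) →ₗ[ZMod D] (V ⧸ SV))
    (hδ' : δ' ∘ₗ φ = φ ∘ₗ δ) :
    LinearMap.ker δ' = Submodule.map φ (Vc.comap δ) ∧
    LinearMap.range δ' = Submodule.map φ (LinearMap.range δ) := by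
  have hφ_apply : ∀ x : C, φ x = SV.mkQ ⟨W x, hWmem x⟩ := by
    intro x; rw [hφ]; rfl
  have hδ'_apply : ∀ x : C, δ' (φ x) = φ (δ x) := fun x => LinearMap.congr_fun hδ' x
  -- complement decomposition: z - W z ∈ Vc
  have hsplit : ∀ z : C, z - W z ∈ Vc := by
    intro z
    have hz : z ∈ V ⊔ Vc := by rw [hcompl.sup_eq_top]; trivial
    obtain ⟨a, ha, b, hb, rfl⟩ := Submodule.mem_sup.mp hz
    have : W (a + b) = a := by rw [map_add, hWV a ha, hWVc b hb, add_zero]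
    rw [this]; simpa using hb
  -- φ vanishes on Vc
  have hφVc : ∀ c ∈ Vc, φ c = 0 := by
    intro c hc
    rw [hφ_apply]
    have : (⟨W c, hWmem c⟩ : V) = 0 := Subtype.ext (hWVc c hc)
    rw [this, map_zero]
  -- φ is surjective
  have hφsurj : ∀ p : V ⧸ SV, ∃ x : C, φ x = p := by
    intro p
    obtain ⟨v, rfl⟩ := SV.mkQ_surjective p
    exact ⟨v.1, by rw [hφ_apply]; exact congrArg _ (Subtype.ext (hWV v.1 v.2))⟩
  -- membership criterion
  have hmemSV : ∀ (u : V), u ∈ SV ↔ ∃ c ∈ Vc, W (δ c) = u.1 := by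
    intro u
    rw [hSV]
    simp [Submodule.mem_comap, Submodule.mem_map]
  constructor
  · apply le_antisymm
    · intro q hq
      rw [LinearMap.mem_ker] at hq
      obtain ⟨x, rfl⟩ := hφsurj q
      have h0 : φ (δ x) = 0 := by rw [← hδ'_apply]; exact hq
      rw [hφ_apply] at h0
      have hm : (⟨W (δ x), hWmem (δ x)⟩ : V) ∈ SV :=
        (Submodule.Quotient.mk_eq_zero SV).mp h0
      obtain ⟨c, hc, hWc⟩ := (hmemSV _).mp hm
      refine ⟨x - c, ?_, ?_⟩
      · -- δ (x - c) ∈ Vc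
        have h1 : W (δ (x - c)) = 0 := by
          rw [map_sub, map_sub, hWc]; simp
        have := hsplit (δ (x - c))
        rwa [h1, sub_zero] at this
      · rw [map_sub, hφVc c hc, sub_zero]
    · intro q hq
      obtain ⟨x, hx, rfl⟩ := hq
      rw [LinearMap.mem_ker, hδ'_apply]
      exact hφVc (δ x) hx
  · apply le_antisymm
    · intro q hq
      obtain ⟨p, rfl⟩ := hq
      obtain ⟨x, rfl⟩ := hφsurj p
      exact ⟨δ x, ⟨x, rfl⟩, (hδ'_apply x).symm⟩
    · rintro q ⟨y, ⟨x, rfl⟩, rfl⟩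
      exact ⟨φ x, hδ'_apply x⟩
end

section
/- The count E^{A,B,R}_{a,b,r} of rank-R extensions of a fixed a×b rank-r matrix to an A×B matrix over Z_D does not depend on the choice of the rank-r matrix being extended. -/
open Submodule LinearMap FiniteDimensional Module Matrix

section Aux
variable {K : Type*} [Field K]

variable {K V W : Type*} [Field K] [AddCommGroup V] [Module K V] [AddCommGroup W] [Module K W]

/-- restriction of `f` to a complement of its kernel gives an equiv onto the range -/
noncomputable def equivOfIsComplKer [FiniteDimensional K V] (f : V →ₗ[K] W) (U : Submodule K V)
    (h : IsCompl (LinearMap.ker f) U) : U ≃ₗ[K] LinearMap.range f := by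
  have hinj : Function.Injective (f ∘ₗ U.subtype) := by
    rw [← LinearMap.ker_eq_bot, LinearMap.ker_comp]
    rw [eq_bot_iff]
    rintro ⟨x, hx⟩ hmem
    simp only [Submodule.mem_comap, Submodule.subtype_apply, Submodule.mem_bot] at hmem ⊢
    have : x ∈ LinearMap.ker f ⊓ U := ⟨hmem, hx⟩
    rw [h.inf_eq_bot] at this
    exact Subtype.ext this
  have hr : LinearMap.range (f ∘ₗ U.subtype) = LinearMap.range f := by
    rw [LinearMap.range_comp, Submodule.range_subtype]
    have : Submodule.map f (LinearMap.ker f ⊔ U) = LinearMap.range f := by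
      rw [h.sup_eq_top, Submodule.map_top]
    rw [← this, Submodule.map_sup]
    have hker : Submodule.map f (LinearMap.ker f) = ⊥ := by
      rw [eq_bot_iff]
      rintro y ⟨x, hx, rfl⟩
      simpa using LinearMap.mem_ker.mp hx
    rw [hker, bot_sup_eq]
  exact (LinearEquiv.ofInjective _ hinj).trans (LinearEquiv.ofEq _ _ hr)

lemma equivOfIsComplKer_apply [FiniteDimensional K V] (f : V →ₗ[K] W) (U : Submodule K V)
    (h : IsCompl (LinearMap.ker f) U) (u : U) :
    (equivOfIsComplKer f U h u : W) = f u := rfl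

lemma exists_conj_of_finrank_range_eq [FiniteDimensional K V] [FiniteDimensional K W]
    (f₁ f₂ : V →ₗ[K] W)
    (h : finrank K (LinearMap.range f₁) = finrank K (LinearMap.range f₂)) :
    ∃ (e₁ : V ≃ₗ[K] V) (e₂ : W ≃ₗ[K] W),
      f₂ = e₂.toLinearMap ∘ₗ f₁ ∘ₗ e₁.toLinearMap := by
  obtain ⟨U₁, hU₁⟩ := Submodule.exists_isCompl (LinearMap.ker f₁)
  obtain ⟨U₂, hU₂⟩ := Submodule.exists_isCompl (LinearMap.ker f₂)
  obtain ⟨S₁, hS₁⟩ := Submodule.exists_isCompl (LinearMap.range f₁)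
  obtain ⟨S₂, hS₂⟩ := Submodule.exists_isCompl (LinearMap.range f₂)
  have hK : finrank K (LinearMap.ker f₂) = finrank K (LinearMap.ker f₁) := by
    have h1 := LinearMap.finrank_range_add_finrank_ker f₁
    have h2 := LinearMap.finrank_range_add_finrank_ker f₂
    omega
  have hU : finrank K U₂ = finrank K U₁ := by
    have h1 := Submodule.finrank_add_eq_of_isCompl hU₁
    have h2 := Submodule.finrank_add_eq_of_isCompl hU₂
    omega
  have hS : finrank K S₁ = finrank K S₂ := by
    have h1 := Submodule.finrank_add_eq_of_isCompl hS₁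
    have h2 := Submodule.finrank_add_eq_of_isCompl hS₂
    omega
  let φK : (LinearMap.ker f₂) ≃ₗ[K] (LinearMap.ker f₁) := LinearEquiv.ofFinrankEq _ _ hK
  let φU : U₂ ≃ₗ[K] U₁ := LinearEquiv.ofFinrankEq _ _ hU
  let φS : S₁ ≃ₗ[K] S₂ := LinearEquiv.ofFinrankEq _ _ hS
  let ψ₁ : U₁ ≃ₗ[K] LinearMap.range f₁ := equivOfIsComplKer f₁ U₁ hU₁
  let ψ₂ : U₂ ≃ₗ[K] LinearMap.range f₂ := equivOfIsComplKer f₂ U₂ hU₂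
  let ρ : (LinearMap.range f₁) ≃ₗ[K] LinearMap.range f₂ :=
    ψ₁.symm.trans (φU.symm.trans ψ₂)
  let e₁ : V ≃ₗ[K] V :=
    (Submodule.prodEquivOfIsCompl _ _ hU₂).symm.trans
      ((φK.prodCongr φU).trans (Submodule.prodEquivOfIsCompl _ _ hU₁))
  let e₂ : W ≃ₗ[K] W :=
    (Submodule.prodEquivOfIsCompl _ _ hS₁).symm.trans
      ((ρ.prodCongr φS).trans (Submodule.prodEquivOfIsCompl _ _ hS₂))
  refine ⟨e₁, e₂, ?_⟩
  ext x
  have hx : x ∈ (LinearMap.ker f₂) ⊔ U₂ := by rw [hU₂.sup_eq_top]; trivial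
  obtain ⟨k, hk, u, hu, rfl⟩ := Submodule.mem_sup.mp hx
  have he₁k : e₁ k = (φK ⟨k, hk⟩ : V) := by
    simp [e₁, Submodule.prodEquivOfIsCompl_symm_apply_left _ _ hU₂ ⟨k, hk⟩]
  have he₁u : e₁ u = (φU ⟨u, hu⟩ : V) := by
    simp [e₁, Submodule.prodEquivOfIsCompl_symm_apply_right _ _ hU₂ ⟨u, hu⟩]
  have hf₁k : f₁ (e₁ k) = 0 := by
    rw [he₁k]; exact LinearMap.mem_ker.mp (φK ⟨k, hk⟩).2
  have hf₁u : f₁ (e₁ u) = (ψ₁ (φU ⟨u, hu⟩) : W) := by rw [he₁u]; rfl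
  have he₂ : e₂ (ψ₁ (φU ⟨u, hu⟩) : W) = (ψ₂ ⟨u, hu⟩ : W) := by
    simp only [e₂, LinearEquiv.trans_apply]
    rw [Submodule.prodEquivOfIsCompl_symm_apply_left _ _ hS₁ (ψ₁ (φU ⟨u, hu⟩))]
    simp [ρ]
  simp only [LinearMap.coe_comp, Function.comp_apply, LinearEquiv.coe_coe, map_add]
  rw [hf₁k, hf₁u, map_zero, zero_add, he₂]
  have : f₂ k = 0 := LinearMap.mem_ker.mp hk
  rw [this, zero_add]
  exact (equivOfIsComplKer_apply f₂ U₂ hU₂ ⟨u, hu⟩).symm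

lemma exists_unit_conj {a b : ℕ} (N₁ N₂ : Matrix (Fin a) (Fin b) K)
    (h : N₁.rank = N₂.rank) :
    ∃ (P : Matrix (Fin a) (Fin a) K) (Q : Matrix (Fin b) (Fin b) K),
      IsUnit P.det ∧ IsUnit Q.det ∧ P * N₁ * Q = N₂ := by
  obtain ⟨e₁, e₂, he⟩ := exists_conj_of_finrank_range_eq N₁.mulVecLin N₂.mulVecLin h
  refine ⟨LinearMap.toMatrix' e₂.toLinearMap, LinearMap.toMatrix' e₁.toLinearMap, ?_, ?_, ?_⟩
  · refine IsUnit.of_mul_eq_one (LinearMap.toMatrix' e₂.symm.toLinearMap).det ?_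
    rw [← Matrix.det_mul, ← LinearMap.toMatrix'_comp]
    simp [LinearMap.toMatrix'_id]
  · refine IsUnit.of_mul_eq_one (LinearMap.toMatrix' e₁.symm.toLinearMap).det ?_
    rw [← Matrix.det_mul, ← LinearMap.toMatrix'_comp]
    simp [LinearMap.toMatrix'_id]
  · have h1 : N₁ = LinearMap.toMatrix' N₁.mulVecLin := by
      rw [← Matrix.toLin'_apply', LinearMap.toMatrix'_toLin']
    have h2 : N₂ = LinearMap.toMatrix' N₂.mulVecLin := by
      rw [← Matrix.toLin'_apply', LinearMap.toMatrix'_toLin']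
    rw [h2, he, LinearMap.toMatrix'_comp, LinearMap.toMatrix'_comp, ← h1, Matrix.mul_assoc]

def expandEquiv {a A : ℕ} (ha : a ≤ A) : Fin a ⊕ Fin (A - a) ≃ Fin A :=
  finSumFinEquiv.trans (finCongr (by omega))

lemma expandEquiv_inl {a A : ℕ} (ha : a ≤ A) (i : Fin a) :
    expandEquiv ha (Sum.inl i) = Fin.castLE ha i := by
  ext
  simp [expandEquiv]

def expandMat {a A : ℕ} (ha : a ≤ A) (P : Matrix (Fin a) (Fin a) K) :
    Matrix (Fin A) (Fin A) K :=
  (Matrix.fromBlocks P 0 0 1).submatrix (expandEquiv ha).symm (expandEquiv ha).symm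

lemma expandMat_mul {a A : ℕ} (ha : a ≤ A) (P P' : Matrix (Fin a) (Fin a) K) :
    expandMat ha P * expandMat ha P' = expandMat ha (P * P') := by
  unfold expandMat
  rw [Matrix.submatrix_mul_equiv, Matrix.fromBlocks_multiply]
  simp

lemma expandMat_one {a A : ℕ} (ha : a ≤ A) :
    expandMat (K := K) ha 1 = 1 := by
  unfold expandMat
  rw [Matrix.fromBlocks_one, Matrix.submatrix_one_equiv]

lemma expandMat_det {a A : ℕ} (ha : a ≤ A) (P : Matrix (Fin a) (Fin a) K) :
    (expandMat ha P).det = P.det := by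
  unfold expandMat
  rw [Matrix.det_submatrix_equiv_self, Matrix.det_fromBlocks_zero₂₁]
  simp

lemma expandMat_sandwich {a b A B : ℕ} (ha : a ≤ A) (hb : b ≤ B)
    (P : Matrix (Fin a) (Fin a) K) (Q : Matrix (Fin b) (Fin b) K)
    (M : Matrix (Fin A) (Fin B) K) :
    (expandMat ha P * M * expandMat hb Q).submatrix (Fin.castLE ha) (Fin.castLE hb) =
      P * M.submatrix (Fin.castLE ha) (Fin.castLE hb) * Q := by
  have hM : M = (M.submatrix (expandEquiv ha) (expandEquiv hb)).submatrix
      (expandEquiv ha).symm (expandEquiv hb).symm := by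
    rw [Matrix.submatrix_submatrix]
    simp only [Function.comp_def, Equiv.apply_symm_apply]
    exact (Matrix.submatrix_id_id M).symm
  set M' := M.submatrix (expandEquiv ha) (expandEquiv hb) with hM'
  have key : expandMat ha P * M * expandMat hb Q =
      ((Matrix.fromBlocks P 0 0 (1 : Matrix (Fin (A - a)) (Fin (A - a)) K)) * M' *
        (Matrix.fromBlocks Q 0 0 (1 : Matrix (Fin (B - b)) (Fin (B - b)) K))).submatrix
        (expandEquiv ha).symm (expandEquiv hb).symm := by
    conv_lhs => rw [hM]
    unfold expandMat
    rw [Matrix.submatrix_mul_equiv, Matrix.submatrix_mul_equiv]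
  rw [key]
  have hcast : ∀ i : Fin a, Fin.castLE ha i = (expandEquiv ha) (Sum.inl i) := fun i =>
    (expandEquiv_inl ha i).symm
  have hcast' : ∀ j : Fin b, Fin.castLE hb j = (expandEquiv hb) (Sum.inl j) := fun j =>
    (expandEquiv_inl hb j).symm
  have hblock : Matrix.fromBlocks P 0 0 (1 : Matrix (Fin (A - a)) (Fin (A - a)) K) * M' *
      Matrix.fromBlocks Q 0 0 (1 : Matrix (Fin (B - b)) (Fin (B - b)) K) =
      Matrix.fromBlocks (P * M'.toBlocks₁₁ * Q) (P * M'.toBlocks₁₂)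
        (M'.toBlocks₂₁ * Q) M'.toBlocks₂₂ := by
    conv_lhs => rw [← Matrix.fromBlocks_toBlocks M']
    rw [Matrix.fromBlocks_multiply, Matrix.fromBlocks_multiply]
    simp [Matrix.mul_assoc]
  rw [hblock]
  have hM11 : M'.toBlocks₁₁ = M.submatrix (Fin.castLE ha) (Fin.castLE hb) := by
    ext i' j'
    simp [Matrix.toBlocks₁₁, hM', hcast, hcast']
  ext i j
  simp only [Matrix.submatrix_apply, hcast, hcast', Equiv.symm_apply_apply,
    Matrix.fromBlocks_apply₁₁, hM11]

end Aux

/-- The number of rank-`R` matrices of size `A×B` over `Z_D` extending a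
fixed `a×b` matrix of rank `r` (in the upper-left corner) does not depend on the choice
of the rank-`r` matrix being extended. -/
theorem count_rank_extensions_independent
    {D : ℕ} [Fact D.Prime]
    (A B a b r R : ℕ) (ha : a ≤ A) (hb : b ≤ B)
    (N₁ N₂ : Matrix (Fin a) (Fin b) (ZMod D))
    (hN₁ : N₁.rank = r) (hN₂ : N₂.rank = r) :
    Nat.card {M : Matrix (Fin A) (Fin B) (ZMod D) //
        M.rank = R ∧ M.submatrix (Fin.castLE ha) (Fin.castLE hb) = N₁} =
    Nat.card {M : Matrix (Fin A) (Fin B) (ZMod D) //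
        M.rank = R ∧ M.submatrix (Fin.castLE ha) (Fin.castLE hb) = N₂} := by
  obtain ⟨P, Q, hP, hQ, hPQ⟩ := exists_unit_conj N₁ N₂ (by rw [hN₁, hN₂])
  have hPd : IsUnit (expandMat (K := ZMod D) ha P).det := by rwa [expandMat_det]
  have hQd : IsUnit (expandMat (K := ZMod D) hb Q).det := by rwa [expandMat_det]
  have hPinv : IsUnit (P⁻¹).det := (Matrix.isUnit_nonsing_inv_det P hP)
  have hQinv : IsUnit (Q⁻¹).det := (Matrix.isUnit_nonsing_inv_det Q hQ)
  have hPid : IsUnit (expandMat (K := ZMod D) ha P⁻¹).det := by rwa [expandMat_det]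
  have hQid : IsUnit (expandMat (K := ZMod D) hb Q⁻¹).det := by rwa [expandMat_det]
  have hPP : expandMat (K := ZMod D) ha P⁻¹ * expandMat ha P = 1 := by
    rw [expandMat_mul, Matrix.nonsing_inv_mul P hP, expandMat_one]
  have hPP' : expandMat (K := ZMod D) ha P * expandMat ha P⁻¹ = 1 := by
    rw [expandMat_mul, Matrix.mul_nonsing_inv P hP, expandMat_one]
  have hQQ : expandMat (K := ZMod D) hb Q * expandMat hb Q⁻¹ = 1 := by
    rw [expandMat_mul, Matrix.mul_nonsing_inv Q hQ, expandMat_one]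
  have hQQ' : expandMat (K := ZMod D) hb Q⁻¹ * expandMat hb Q = 1 := by
    rw [expandMat_mul, Matrix.nonsing_inv_mul Q hQ, expandMat_one]
  have hback : P⁻¹ * N₂ * Q⁻¹ = N₁ := by
    rw [← hPQ]
    rw [Matrix.mul_assoc, Matrix.mul_assoc, Matrix.mul_nonsing_inv Q hQ, Matrix.mul_one,
      ← Matrix.mul_assoc, Matrix.nonsing_inv_mul P hP, Matrix.one_mul]
  refine Nat.card_congr ?_
  refine
    { toFun := fun M => ⟨expandMat ha P * M.1 * expandMat hb Q, ?_, ?_⟩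
      invFun := fun M => ⟨expandMat ha P⁻¹ * M.1 * expandMat hb Q⁻¹, ?_, ?_⟩
      left_inv := ?_
      right_inv := ?_ }
  · rw [Matrix.rank_mul_eq_left_of_isUnit_det _ _ hQd,
      Matrix.rank_mul_eq_right_of_isUnit_det _ _ hPd, M.2.1]
  · rw [expandMat_sandwich, M.2.2, hPQ]
  · rw [Matrix.rank_mul_eq_left_of_isUnit_det _ _ hQid,
      Matrix.rank_mul_eq_right_of_isUnit_det _ _ hPid, M.2.1]
  · rw [expandMat_sandwich, M.2.2, hback]
  · rintro ⟨M, hM⟩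
    ext : 1
    show expandMat ha P⁻¹ * (expandMat ha P * M * expandMat hb Q) * expandMat hb Q⁻¹ = M
    simp only [Matrix.mul_assoc]
    rw [hQQ, Matrix.mul_one, ← Matrix.mul_assoc, hPP, Matrix.one_mul]
  · rintro ⟨M, hM⟩
    ext : 1
    show expandMat ha P * (expandMat ha P⁻¹ * M * expandMat hb Q⁻¹) * expandMat hb Q = M
    simp only [Matrix.mul_assoc]
    rw [hQQ', Matrix.mul_one, ← Matrix.mul_assoc, hPP', Matrix.one_mul]
end

section
/- Let δ₁, δ₂ be boundary operators on Z_D^{2n} conjugate (by block-diagonal invertible matrices commuting with P = diag(I,−I)) to the standard boundary with parameters H, L (n = H+2L), and ∂ = δ₁⊗I + P₁⊗δ₂. Then the number Z_{H,L}(r₊,r₋) of elements h ∈ ker ∂ ∩ C₊ whose two diagonal blocks h₊, h₋ have ranks r₊, r₋ depends only on r₊, r₋, H, L (not on the conjugating matrices). -/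
open Matrix
/-- Index type of size `n = H + 2L`, split into blocks of sizes `H`, `L`, `L`. -/
abbrev BlockIx (H L : ℕ) : Type := Fin H ⊕ (Fin L ⊕ Fin L)

/-- The standard matrix `δ₀` whose only nonzero block is an identity `I_L`
mapping the third block of coordinates to the second. -/
def stdDelta0 (D H L : ℕ) : Matrix (BlockIx H L) (BlockIx H L) (ZMod D) :=
  Matrix.fromBlocks 0 0 0
    (Matrix.fromBlocks (0 : Matrix (Fin L) (Fin L) (ZMod D)) 1 0 0)

/-- A boundary operator conjugate to the standard one by the block diagonal invertible
matrix `U₊ ⊕ U₋` (which commutes with `P = diag(I,−I)`). -/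
def conjBoundary (D H L : ℕ) [Fact D.Prime]
    (Up Um : GL (BlockIx H L) (ZMod D)) :
    Matrix (BlockIx H L ⊕ BlockIx H L) (BlockIx H L ⊕ BlockIx H L) (ZMod D) :=
  Matrix.fromBlocks 0
    ((Up : Matrix _ _ (ZMod D)) * stdDelta0 D H L * ((Um⁻¹ : GL _ _) : Matrix _ _ (ZMod D)))
    ((Um : Matrix _ _ (ZMod D)) * stdDelta0 D H L * ((Up⁻¹ : GL _ _) : Matrix _ _ (ZMod D))) 0

/-- The number of elements `h ∈ ker ∂ ∩ C₊` (block diagonal matrices `diag(h₊,h₋)` with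
`∂ h = δ₁ h + P₁ h δ₂ᵀ = 0`) whose diagonal blocks have ranks `r₊`, `r₋`. -/
noncomputable def Zcount (D H L : ℕ) [Fact D.Prime]
    (U1p U1m U2p U2m : GL (BlockIx H L) (ZMod D)) (rp rm : ℕ) : ℕ :=
  Nat.card {h : Matrix (BlockIx H L) (BlockIx H L) (ZMod D) ×
      Matrix (BlockIx H L) (BlockIx H L) (ZMod D) //
    h.1.rank = rp ∧ h.2.rank = rm ∧
    conjBoundary D H L U1p U1m * Matrix.fromBlocks h.1 0 0 h.2 +
      Matrix.fromBlocks (1 : Matrix (BlockIx H L) (BlockIx H L) (ZMod D)) 0 0 (-1) *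
        Matrix.fromBlocks h.1 0 0 h.2 * (conjBoundary D H L U2p U2m)ᵀ = 0}

section helpers
variable {n : Type*} [Fintype n] [DecidableEq n] {R : Type*} [Field R]

lemma unit_conj_eq_zero (U V : GL n R) (X : Matrix n n R) :
    (U : Matrix n n R) * X * ((V : Matrix n n R))ᵀ = 0 ↔ X = 0 := by
  constructor
  · intro h
    haveI := U.invertible
    haveI := V.invertible
    haveI : Invertible ((V : Matrix n n R)ᵀ) :=
      (Matrix.transposeInvertibleEquivInvertible _).symm V.invertible
    have := congrArg (fun Y => ((U⁻¹ : GL n R) : Matrix n n R) * Y *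
      (((V⁻¹ : GL n R) : Matrix n n R))ᵀ) h
    simpa [Matrix.mul_assoc, Matrix.transpose_nonsing_inv, Matrix.coe_units_inv,
      Matrix.inv_mul_of_invertible, Matrix.mul_inv_of_invertible,
      ← Matrix.mul_assoc] using this
  · rintro rfl; simp

lemma rank_unit_conj (U V : GL n R) (X : Matrix n n R) :
    ((U : Matrix n n R) * X * ((V : Matrix n n R))ᵀ).rank = X.rank := by
  rw [Matrix.rank_mul_eq_left_of_isUnit_det, Matrix.rank_mul_eq_right_of_isUnit_det]
  · exact (Matrix.isUnit_iff_isUnit_det _).mp U.isUnit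
  · rw [Matrix.det_transpose]
    exact (Matrix.isUnit_iff_isUnit_det _).mp V.isUnit

end helpers

section main
variable {D : ℕ} [Fact D.Prime] (H L : ℕ)

lemma cond_U (U1p U1m U2p U2m : GL (BlockIx H L) (ZMod D))
    (hp hm : Matrix (BlockIx H L) (BlockIx H L) (ZMod D)) :
    (conjBoundary D H L U1p U1m *
        Matrix.fromBlocks ((U1p : Matrix _ _ (ZMod D)) * hp * ((U2p : Matrix _ _ (ZMod D)))ᵀ) 0 0
          ((U1m : Matrix _ _ (ZMod D)) * hm * ((U2m : Matrix _ _ (ZMod D)))ᵀ) +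
      Matrix.fromBlocks (1 : Matrix (BlockIx H L) (BlockIx H L) (ZMod D)) 0 0 (-1) *
        Matrix.fromBlocks ((U1p : Matrix _ _ (ZMod D)) * hp * ((U2p : Matrix _ _ (ZMod D)))ᵀ) 0 0
          ((U1m : Matrix _ _ (ZMod D)) * hm * ((U2m : Matrix _ _ (ZMod D)))ᵀ) *
        (conjBoundary D H L U2p U2m)ᵀ = 0) ↔
    (stdDelta0 D H L * hm + hp * (stdDelta0 D H L)ᵀ = 0 ∧
     stdDelta0 D H L * hp - hm * (stdDelta0 D H L)ᵀ = 0) := by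
  haveI := U1p.invertible
  haveI := U1m.invertible
  haveI := U2p.invertible
  haveI := U2m.invertible
  haveI : Invertible ((U2p : Matrix (BlockIx H L) (BlockIx H L) (ZMod D))ᵀ) :=
    (Matrix.transposeInvertibleEquivInvertible _).symm U2p.invertible
  haveI : Invertible ((U2m : Matrix (BlockIx H L) (BlockIx H L) (ZMod D))ᵀ) :=
    (Matrix.transposeInvertibleEquivInvertible _).symm U2m.invertible
  have key : conjBoundary D H L U1p U1m *
        Matrix.fromBlocks ((U1p : Matrix _ _ (ZMod D)) * hp * ((U2p : Matrix _ _ (ZMod D)))ᵀ) 0 0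
          ((U1m : Matrix _ _ (ZMod D)) * hm * ((U2m : Matrix _ _ (ZMod D)))ᵀ) +
      Matrix.fromBlocks (1 : Matrix (BlockIx H L) (BlockIx H L) (ZMod D)) 0 0 (-1) *
        Matrix.fromBlocks ((U1p : Matrix _ _ (ZMod D)) * hp * ((U2p : Matrix _ _ (ZMod D)))ᵀ) 0 0
          ((U1m : Matrix _ _ (ZMod D)) * hm * ((U2m : Matrix _ _ (ZMod D)))ᵀ) *
        (conjBoundary D H L U2p U2m)ᵀ =
      Matrix.fromBlocks 0
        ((U1p : Matrix _ _ (ZMod D)) * (stdDelta0 D H L * hm + hp * (stdDelta0 D H L)ᵀ) *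
          ((U2m : Matrix _ _ (ZMod D)))ᵀ)
        ((U1m : Matrix _ _ (ZMod D)) * (stdDelta0 D H L * hp - hm * (stdDelta0 D H L)ᵀ) *
          ((U2p : Matrix _ _ (ZMod D)))ᵀ) 0 := by
    simp only [conjBoundary, Matrix.fromBlocks_transpose, Matrix.fromBlocks_multiply,
      Matrix.fromBlocks_add, Matrix.transpose_zero, Matrix.transpose_mul,
      Matrix.coe_units_inv, Matrix.transpose_nonsing_inv,
      Matrix.mul_zero, Matrix.zero_mul, add_zero, zero_add, Matrix.one_mul, Matrix.neg_mul,
      Matrix.mul_add, Matrix.add_mul, Matrix.mul_sub, Matrix.sub_mul, sub_eq_add_neg,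
      Matrix.mul_neg, Matrix.neg_mul, Matrix.mul_assoc,
      Matrix.inv_mul_cancel_left_of_invertible, Matrix.mul_inv_cancel_left_of_invertible]
  rw [key, show (0 : Matrix (BlockIx H L ⊕ BlockIx H L) (BlockIx H L ⊕ BlockIx H L) (ZMod D)) =
    Matrix.fromBlocks (0 : Matrix (BlockIx H L) (BlockIx H L) (ZMod D))
      (0 : Matrix (BlockIx H L) (BlockIx H L) (ZMod D))
      (0 : Matrix (BlockIx H L) (BlockIx H L) (ZMod D))
      (0 : Matrix (BlockIx H L) (BlockIx H L) (ZMod D)) from Matrix.fromBlocks_zero.symm,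
    Matrix.fromBlocks_inj]
  simp [unit_conj_eq_zero]

lemma Zcount_eq_std (U1p U1m U2p U2m : GL (BlockIx H L) (ZMod D)) (rp rm : ℕ) :
    Zcount D H L U1p U1m U2p U2m rp rm = Zcount D H L 1 1 1 1 rp rm := by
  symm
  unfold Zcount
  apply Nat.card_congr
  refine Equiv.subtypeEquiv (Equiv.prodCongr
    ⟨fun h => (U1p : Matrix _ _ (ZMod D)) * h * ((U2p : Matrix _ _ (ZMod D)))ᵀ,
     fun h => ((U1p⁻¹ : GL _ _) : Matrix _ _ (ZMod D)) * h *
       (((U2p⁻¹ : GL _ _) : Matrix _ _ (ZMod D)))ᵀ, fun h => ?_, fun h => ?_⟩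
    ⟨fun h => (U1m : Matrix _ _ (ZMod D)) * h * ((U2m : Matrix _ _ (ZMod D)))ᵀ,
     fun h => ((U1m⁻¹ : GL _ _) : Matrix _ _ (ZMod D)) * h *
       (((U2m⁻¹ : GL _ _) : Matrix _ _ (ZMod D)))ᵀ, fun h => ?_, fun h => ?_⟩) (fun h => ?_)
  case _ =>
    haveI := U1p.invertible; haveI := U2p.invertible
    haveI : Invertible ((U2p : Matrix (BlockIx H L) (BlockIx H L) (ZMod D))ᵀ) :=
      (Matrix.transposeInvertibleEquivInvertible _).symm U2p.invertible
    simp [Matrix.coe_units_inv, Matrix.transpose_nonsing_inv, Matrix.mul_assoc,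
      Matrix.inv_mul_cancel_left_of_invertible, Matrix.mul_inv_cancel_left_of_invertible,
      Matrix.mul_inv_cancel_right_of_invertible, Matrix.inv_mul_cancel_right_of_invertible,
      ← Matrix.mul_assoc]
  case _ =>
    haveI := U1p.invertible; haveI := U2p.invertible
    haveI : Invertible ((U2p : Matrix (BlockIx H L) (BlockIx H L) (ZMod D))ᵀ) :=
      (Matrix.transposeInvertibleEquivInvertible _).symm U2p.invertible
    simp [Matrix.coe_units_inv, Matrix.transpose_nonsing_inv, Matrix.mul_assoc,
      Matrix.inv_mul_cancel_left_of_invertible, Matrix.mul_inv_cancel_left_of_invertible,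
      Matrix.mul_inv_cancel_right_of_invertible, Matrix.inv_mul_cancel_right_of_invertible,
      ← Matrix.mul_assoc]
  case _ =>
    haveI := U1m.invertible; haveI := U2m.invertible
    haveI : Invertible ((U2m : Matrix (BlockIx H L) (BlockIx H L) (ZMod D))ᵀ) :=
      (Matrix.transposeInvertibleEquivInvertible _).symm U2m.invertible
    simp [Matrix.coe_units_inv, Matrix.transpose_nonsing_inv, Matrix.mul_assoc,
      Matrix.inv_mul_cancel_left_of_invertible, Matrix.mul_inv_cancel_left_of_invertible,
      Matrix.mul_inv_cancel_right_of_invertible, Matrix.inv_mul_cancel_right_of_invertible,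
      ← Matrix.mul_assoc]
  case _ =>
    haveI := U1m.invertible; haveI := U2m.invertible
    haveI : Invertible ((U2m : Matrix (BlockIx H L) (BlockIx H L) (ZMod D))ᵀ) :=
      (Matrix.transposeInvertibleEquivInvertible _).symm U2m.invertible
    simp [Matrix.coe_units_inv, Matrix.transpose_nonsing_inv, Matrix.mul_assoc,
      Matrix.inv_mul_cancel_left_of_invertible, Matrix.mul_inv_cancel_left_of_invertible,
      Matrix.mul_inv_cancel_right_of_invertible, Matrix.inv_mul_cancel_right_of_invertible,
      ← Matrix.mul_assoc]
  case _ =>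
    obtain ⟨hp, hm⟩ := h
    have h1 := cond_U H L 1 1 1 1 hp hm
    have h2 := cond_U H L U1p U1m U2p U2m hp hm
    simp only [Units.val_one, Matrix.one_mul, Matrix.transpose_one, Matrix.mul_one] at h1
    simp only [Equiv.prodCongr_apply, Equiv.coe_fn_mk, Prod.map]
    rw [rank_unit_conj, rank_unit_conj, h1, h2]

end main

/-- `Z_{H,L}(r₊,r₋)` depends only on `r₊, r₋, H, L`, not on the block
diagonal invertible matrices conjugating the standard boundary operators. -/
theorem Zcount_independent_of_conjugation
    {D : ℕ} [Fact D.Prime] (hDodd : Odd D) (H L : ℕ)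
    (U1p U1m U2p U2m V1p V1m V2p V2m : GL (BlockIx H L) (ZMod D)) (rp rm : ℕ) :
    Zcount D H L U1p U1m U2p U2m rp rm = Zcount D H L V1p V1m V2p V2m rp rm := by
  rw [Zcount_eq_std H L U1p U1m U2p U2m, Zcount_eq_std H L V1p V1m V2p V2m]
end

section
/- With δ₁, δ₂ equal to the standard boundary operator on Z_D^{2n} with parameters H, L, the space ker ∂ ∩ C₊ (for ∂ = δ₁⊗I + P₁⊗δ₂) consists exactly of the block-diagonal matrices h = diag(h₊, h₋) where, in 3×3 block form with sizes H, L, L, h₊ has blocks [[A₊,B₊,0],[C₊,D₊,F],[0,G,0]] and h₋ has blocks [[A₋,B₋,0],[C₋,D₋,G],[0,−F,0]] for arbitrary matrices A±, B±, C±, D±, F, G. -/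
open Matrix

lemma fb_zero_iff {α : Type*} [Zero α] {n o l m : Type*}
    {A : Matrix n l α} {B : Matrix n m α} {C : Matrix o l α} {E : Matrix o m α} :
    Matrix.fromBlocks A B C E = 0 ↔ A = 0 ∧ B = 0 ∧ C = 0 ∧ E = 0 := by
  rw [← Matrix.fromBlocks_zero, Matrix.fromBlocks_inj]

@[simp] lemma fc_zero_iff {R m n₁ n₂ : Type*} [Zero R] {A : Matrix m n₁ R} {B : Matrix m n₂ R} :
    Matrix.fromCols A B = 0 ↔ A = 0 ∧ B = 0 := by
  constructor
  · intro h
    constructor <;> ext i j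
    · simpa using congrFun (congrFun h i) (Sum.inl j)
    · simpa using congrFun (congrFun h i) (Sum.inr j)
  · rintro ⟨rfl, rfl⟩; ext i (j|j) <;> rfl

@[simp] lemma fr_zero_iff {R m₁ m₂ n : Type*} [Zero R] {A : Matrix m₁ n R} {B : Matrix m₂ n R} :
    Matrix.fromRows A B = 0 ↔ A = 0 ∧ B = 0 := by
  constructor
  · intro h
    constructor <;> ext i j
    · simpa using congrFun (congrFun h (Sum.inl i)) j
    · simpa using congrFun (congrFun h (Sum.inr i)) j
  · rintro ⟨rfl, rfl⟩; ext (i|i) j <;> rfl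

lemma step1 {D : ℕ} (H L : ℕ) (hp hm : Matrix (BlockIx H L) (BlockIx H L) (ZMod D)) :
    (Matrix.fromBlocks 0 (stdDelta0 D H L) (stdDelta0 D H L) 0 *
        Matrix.fromBlocks hp 0 0 hm +
      Matrix.fromBlocks (1 : Matrix (BlockIx H L) (BlockIx H L) (ZMod D)) 0 0 (-1) *
        Matrix.fromBlocks hp 0 0 hm *
        (Matrix.fromBlocks 0 (stdDelta0 D H L) (stdDelta0 D H L) 0)ᵀ = 0) ↔
    (stdDelta0 D H L * hm + hp * (stdDelta0 D H L)ᵀ = 0 ∧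
     stdDelta0 D H L * hp - hm * (stdDelta0 D H L)ᵀ = 0) := by
  simp [Matrix.fromBlocks_multiply, Matrix.fromBlocks_transpose, Matrix.fromBlocks_add,
    fb_zero_iff, sub_eq_add_neg]

lemma core {D : ℕ} (H L : ℕ)
    (Ap Am : Matrix (Fin H) (Fin H) (ZMod D))
    (Bp Bm Bp' Bm' : Matrix (Fin H) (Fin L) (ZMod D))
    (Cp Cm Cp' Cm' : Matrix (Fin L) (Fin H) (ZMod D))
    (Dp Dm Fp Fm Gp Gm Xp Xm : Matrix (Fin L) (Fin L) (ZMod D)) :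
    (stdDelta0 D H L * (Matrix.fromBlocks Am (Matrix.fromCols Bm Bm')
        (Matrix.fromRows Cm Cm') (Matrix.fromBlocks Dm Fm Gm Xm)) +
      (Matrix.fromBlocks Ap (Matrix.fromCols Bp Bp')
        (Matrix.fromRows Cp Cp') (Matrix.fromBlocks Dp Fp Gp Xp)) * (stdDelta0 D H L)ᵀ = 0 ∧
     stdDelta0 D H L * (Matrix.fromBlocks Ap (Matrix.fromCols Bp Bp')
        (Matrix.fromRows Cp Cp') (Matrix.fromBlocks Dp Fp Gp Xp)) -
      (Matrix.fromBlocks Am (Matrix.fromCols Bm Bm')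
        (Matrix.fromRows Cm Cm') (Matrix.fromBlocks Dm Fm Gm Xm)) * (stdDelta0 D H L)ᵀ = 0) ↔
    (Bp' = 0 ∧ Bm' = 0 ∧ Cp' = 0 ∧ Cm' = 0 ∧ Xp = 0 ∧ Xm = 0 ∧ Fm = Gp ∧ Gm = -Fp) := by
  simp [stdDelta0, Matrix.fromBlocks_transpose, Matrix.fromBlocks_multiply,
    Matrix.fromBlocks_mul_fromRows, Matrix.fromCols_mul_fromBlocks, Matrix.fromBlocks_add,
    sub_eq_add_neg, Matrix.fromBlocks_neg, fb_zero_iff, Matrix.fromCols_ext_iff,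
    Matrix.fromRows_ext_iff, eq_comm (a := Fm) (b := Gp)]
  simp only [add_neg_eq_zero, add_eq_zero_iff_eq_neg, neg_neg]
  tauto

/-- For the standard boundary operators with parameters `H, L`, the space
`ker ∂ ∩ C₊` consists exactly of block diagonal matrices `h = diag(h₊,h₋)` where, in
3×3 block form (sizes `H, L, L`), `h₊ = [[A₊,B₊,0],[C₊,D₊,F],[0,G,0]]` and
`h₋ = [[A₋,B₋,0],[C₋,D₋,G],[0,−F,0]]` for arbitrary blocks. -/
theorem ker_boundary_standard_characterization
    {D : ℕ} [Fact D.Prime] (hDodd : Odd D) (H L : ℕ)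
    (hp hm : Matrix (BlockIx H L) (BlockIx H L) (ZMod D)) :
    (Matrix.fromBlocks 0 (stdDelta0 D H L) (stdDelta0 D H L) 0 *
        Matrix.fromBlocks hp 0 0 hm +
      Matrix.fromBlocks (1 : Matrix (BlockIx H L) (BlockIx H L) (ZMod D)) 0 0 (-1) *
        Matrix.fromBlocks hp 0 0 hm *
        (Matrix.fromBlocks 0 (stdDelta0 D H L) (stdDelta0 D H L) 0)ᵀ = 0) ↔
    ∃ (Ap Am : Matrix (Fin H) (Fin H) (ZMod D))
      (Bp Bm : Matrix (Fin H) (Fin L) (ZMod D))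
      (Cp Cm : Matrix (Fin L) (Fin H) (ZMod D))
      (Dp Dm F G : Matrix (Fin L) (Fin L) (ZMod D)),
      hp = Matrix.fromBlocks Ap (Matrix.fromCols Bp 0) (Matrix.fromRows Cp 0)
          (Matrix.fromBlocks Dp F G 0) ∧
      hm = Matrix.fromBlocks Am (Matrix.fromCols Bm 0) (Matrix.fromRows Cm 0)
          (Matrix.fromBlocks Dm G (-F) 0) := by
  rw [step1]
  have hpdec : hp = Matrix.fromBlocks hp.toBlocks₁₁
      (Matrix.fromCols hp.toBlocks₁₂.toCols₁ hp.toBlocks₁₂.toCols₂)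
      (Matrix.fromRows hp.toBlocks₂₁.toRows₁ hp.toBlocks₂₁.toRows₂)
      (Matrix.fromBlocks hp.toBlocks₂₂.toBlocks₁₁ hp.toBlocks₂₂.toBlocks₁₂
        hp.toBlocks₂₂.toBlocks₂₁ hp.toBlocks₂₂.toBlocks₂₂) := by
    rw [Matrix.fromCols_toCols, Matrix.fromRows_toRows, Matrix.fromBlocks_toBlocks,
      Matrix.fromBlocks_toBlocks]
  have hmdec : hm = Matrix.fromBlocks hm.toBlocks₁₁
      (Matrix.fromCols hm.toBlocks₁₂.toCols₁ hm.toBlocks₁₂.toCols₂)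
      (Matrix.fromRows hm.toBlocks₂₁.toRows₁ hm.toBlocks₂₁.toRows₂)
      (Matrix.fromBlocks hm.toBlocks₂₂.toBlocks₁₁ hm.toBlocks₂₂.toBlocks₁₂
        hm.toBlocks₂₂.toBlocks₂₁ hm.toBlocks₂₂.toBlocks₂₂) := by
    rw [Matrix.fromCols_toCols, Matrix.fromRows_toRows, Matrix.fromBlocks_toBlocks,
      Matrix.fromBlocks_toBlocks]
  constructor
  · intro h
    rw [hpdec, hmdec, core] at h
    obtain ⟨h1, h2, h3, h4, h5, h6, h7, h8⟩ := h
    refine ⟨hp.toBlocks₁₁, hm.toBlocks₁₁, hp.toBlocks₁₂.toCols₁, hm.toBlocks₁₂.toCols₁,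
      hp.toBlocks₂₁.toRows₁, hm.toBlocks₂₁.toRows₁, hp.toBlocks₂₂.toBlocks₁₁,
      hm.toBlocks₂₂.toBlocks₁₁, hp.toBlocks₂₂.toBlocks₁₂, hp.toBlocks₂₂.toBlocks₂₁, ?_, ?_⟩
    · conv_lhs => rw [hpdec]
      rw [h1, h3, h5]
    · conv_lhs => rw [hmdec]
      rw [h2, h4, h6, h7, h8]
  · rintro ⟨Ap, Am, Bp, Bm, Cp, Cm, Dp, Dm, F, G, rfl, rfl⟩
    rw [core]
    tauto
end

section
/- For any ε > 0 there is c' > 0 such that for any 1 ≤ R ≤ n', the probability that a uniformly random n'×n' matrix of rank R over Z_D has all row and column weights at most c'n' is O(1)·D^{R² − 2(1−ε)n'R}. -/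
open Matrix Submodule Set Finset


open Matrix Submodule Set

variable {F : Type*} [Field F]

/-- From a matrix of rank r, select r columns forming a basis of the column space. -/
lemma col_select {m k r : ℕ} (P : Matrix (Fin m) (Fin k) F) (hP : P.rank = r) :
    ∃ J : Fin r → Fin k, LinearIndependent F (fun j => Pᵀ (J j)) ∧
      span F (Set.range fun j => Pᵀ (J j)) = span F (Set.range Pᵀ) := by
  classical
  obtain ⟨b, hbsub, hbspan, hbli⟩ := exists_linearIndependent F (Set.range Pᵀ)
  have hbfin : b.Finite := ((Set.finite_range Pᵀ).subset hbsub)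
  haveI : Fintype b := hbfin.fintype
  have hcard : Fintype.card b = r := by
    have h1 : Module.finrank F (span F b) = b.toFinset.card := finrank_span_set_eq_card hbli
    have h2 : Module.finrank F (span F (Set.range Pᵀ)) = r := by
      exact (Matrix.rank_eq_finrank_span_cols P).symm.trans hP
    rw [hbspan, h2] at h1
    rw [Set.toFinset_card] at h1
    exact h1.symm
  obtain e : Fin r ≃ b := (Fintype.equivFinOfCardEq hcard).symm
  have hpre : ∀ j : Fin r, ∃ jc : Fin k, Pᵀ jc = (e j : Fin m → F) := by
    intro j
    exact hbsub (e j).2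
  choose J hJ using hpre
  refine ⟨J, ?_, ?_⟩
  · have : (fun j => Pᵀ (J j)) = (fun x : b => (x : Fin m → F)) ∘ e := by
      funext j; simp [hJ j]
    rw [this]
    exact hbli.comp e e.injective
  · have : (Set.range fun j => Pᵀ (J j)) = b := by
      rw [show (fun j => Pᵀ (J j)) = (fun x : b => (x : Fin m → F)) ∘ e from funext fun j => hJ j]
      rw [Set.range_comp]
      simp [Set.range_eq_univ.mpr e.surjective]
    rw [this, hbspan]

/-- A square matrix with linearly independent rows is a unit. -/
lemma isUnit_of_li_rows {r : ℕ} (Q : Matrix (Fin r) (Fin r) F) (h : LinearIndependent F Q) :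
    IsUnit Q := by
  rcases Nat.eq_zero_or_pos r with rfl | hr
  · exact (Matrix.isUnit_iff_isUnit_det _).mpr (by simp [Matrix.det_fin_zero])
  · rw [Matrix.isUnit_iff_isUnit_det, ← Matrix.det_transpose]
    haveI : Nonempty (Fin r) := Fin.pos_iff_nonempty.1 hr
    let b := basisOfLinearIndependentOfCardEqFinrank h (by simp)
    have := (Pi.basisFun F (Fin r)).invertibleToMatrix b
    rw [← Module.Basis.coePiBasisFun.toMatrix_eq_transpose, ← coe_basisOfLinearIndependentOfCardEqFinrank h]
    exact Matrix.isUnit_det_of_invertible _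

/-- Reconstruction: a rank-R matrix is determined by R suitable rows and columns. -/
lemma exists_reconstruction {n R : ℕ} (M : Matrix (Fin n) (Fin n) F) (hR : M.rank = R) :
    ∃ I J : Fin R → Fin n,
      M = M.submatrix id J * (M.submatrix I J)⁻¹ * M.submatrix I id := by
  classical
  obtain ⟨J, hli, hspan⟩ := col_select M hR
  set v : Fin R → (Fin n → F) := fun j => Mᵀ (J j) with hv
  set C : Matrix (Fin n) (Fin R) F := M.submatrix id J with hC
  have hCT : Cᵀ = Matrix.of v := by
    ext r i; rfl
  have mem : ∀ j : Fin n, Mᵀ j ∈ span F (Set.range v) := by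
    intro j; rw [hspan]; exact subset_span (Set.mem_range_self j)
  let B : Module.Basis (Fin R) F (span F (Set.range v)) := Module.Basis.span hli
  set E : Matrix (Fin R) (Fin n) F :=
    Matrix.of (fun r j => B.repr ⟨Mᵀ j, mem j⟩ r) with hE
  have hME : M = C * E := by
    ext i j
    have h0 := B.sum_repr ⟨Mᵀ j, mem j⟩
    have h1 := congrArg (Subtype.val) h0
    have h2 := congrFun h1 i
    have h3 : ∀ r : Fin R, ((B.repr ⟨Mᵀ j, mem j⟩ r) • (B r) : span F (Set.range v)).1 i
        = E r j * M i (J r) := by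
      intro r
      have : ((B r : Fin n → F)) = v r := congrArg Subtype.val (Module.Basis.span_apply hli r)
      simp [E, this, hv, Matrix.transpose_apply, mul_comm]
    rw [Matrix.mul_apply]
    calc M i j = (((Finset.univ.sum fun r => (B.repr ⟨Mᵀ j, mem j⟩ r) • (B r)) :
          span F (Set.range v)).1) i := by rw [h0]; rfl
      _ = Finset.univ.sum fun r => ((B.repr ⟨Mᵀ j, mem j⟩ r) • (B r) :
          span F (Set.range v)).1 i := by
          rw [AddSubmonoidClass.coe_finset_sum]; simp [Finset.sum_apply]
      _ = Finset.univ.sum fun r => E r j * M i (J r) := by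
          exact Finset.sum_congr rfl fun r _ => h3 r
      _ = Finset.univ.sum fun r => C i r * E r j := by
          exact Finset.sum_congr rfl fun r _ => by rw [mul_comm]; rfl
  have hEJ : E.submatrix id J = (1 : Matrix (Fin R) (Fin R) F) := by
    ext r j
    have heq : (⟨Mᵀ (J j), mem (J j)⟩ : span F (Set.range v)) = B j := by
      apply Subtype.ext
      rw [Module.Basis.span_apply hli j]
    simp only [Matrix.submatrix_apply, id_eq, E, Matrix.of_apply, heq, Module.Basis.repr_self]
    rw [Finsupp.single_apply, Matrix.one_apply]
    simp [eq_comm]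
  -- C has rank R
  have hrankC : C.rank = R := by
    have h1 : (Cᵀ).rank = R := by
      rw [hCT]
      have := hli.rank_matrix (M := Matrix.of v)
      rwa [Fintype.card_fin] at this
    rwa [Matrix.rank_transpose] at h1
  -- select rows
  have hrankCT : (Cᵀ).rank = R := by rwa [Matrix.rank_transpose]
  obtain ⟨I, hliI, -⟩ := col_select Cᵀ hrankCT
  set Q : Matrix (Fin R) (Fin R) F := C.submatrix I id with hQdef
  have hliQ : LinearIndependent F Q := by
    have : (fun j => Cᵀᵀ (I j)) = Q := by
      funext j; ext r; rfl
    rwa [this] at hliI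
  have hQ : IsUnit Q := isUnit_of_li_rows Q hliQ
  have hQdet : IsUnit Q.det := (Matrix.isUnit_iff_isUnit_det Q).mp hQ
  have hMIid : M.submatrix I id = Q * E := by
    rw [hME, Matrix.submatrix_mul C E I id id Function.bijective_id]
    rfl
  have hMidJ : M.submatrix id J = C := by
    rw [hME, Matrix.submatrix_mul C E id id J Function.bijective_id, hEJ]
    simp [Matrix.submatrix_id_id]
  have hMIJ : M.submatrix I J = Q := by
    rw [hME, Matrix.submatrix_mul C E I id J Function.bijective_id, hEJ]
    rw [mul_one]
  refine ⟨I, J, ?_⟩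
  rw [hMIid, hMidJ, hMIJ, Matrix.mul_assoc, ← Matrix.mul_assoc Q⁻¹ Q E,
    Matrix.nonsing_inv_mul Q hQdet, Matrix.one_mul, ← hME]


open Finset

lemma sum_prod_pow {α : Type*} [Fintype α] (g : α → ℝ) :
    ∀ n : ℕ, (∑ v : Fin n → α, ∏ j, g (v j)) = (∑ x : α, g x) ^ n := by
  intro n
  induction n with
  | zero => simp
  | succ n ih =>
    rw [← (Fin.consEquiv fun _ : Fin (n+1) => α).sum_comp]
    simp only [Fin.consEquiv, Equiv.coe_fn_mk]
    rw [Fintype.sum_prod_type]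
    have : ∀ (x : α) (v : Fin n → α), (∏ j, g ((Fin.cons x v : Fin (n+1) → α) j)) = g x * ∏ j, g (v j) := by
      intro x v
      rw [Fin.prod_univ_succ]
      simp
    calc (∑ x : α, ∑ v : Fin n → α, ∏ j, g ((Fin.cons x v : Fin (n+1) → α) j))
        = ∑ x : α, ∑ v : Fin n → α, g x * ∏ j, g (v j) := by
          refine Finset.sum_congr rfl fun x _ => Finset.sum_congr rfl fun v _ => this x v
      _ = (∑ x : α, g x) * ∑ v : Fin n → α, ∏ j, g (v j) := by
          rw [Finset.sum_mul]
          refine Finset.sum_congr rfl fun x _ => ?_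
          rw [Finset.mul_sum]
      _ = (∑ x : α, g x) ^ n.succ := by rw [ih, pow_succ]; ring

lemma lw_card_bound {D : ℕ} [Fact (1 < D)] (n : ℕ) (c' t : ℝ) (ht0 : 0 < t) (ht1 : t ≤ 1)
    (hc : 0 ≤ c') :
    (Nat.card {v : Fin n → ZMod D //
        ((Finset.univ.filter fun j => v j ≠ 0).card : ℝ) ≤ c' * n} : ℝ) * t ^ (c' * n) ≤
      (1 + ((D : ℝ) - 1) * t) ^ n := by
  classical
  haveI : NeZero D := ⟨by have := Fact.out (p := 1 < D); omega⟩
  set P : (Fin n → ZMod D) → Prop :=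
    fun v => ((Finset.univ.filter fun j => v j ≠ 0).card : ℝ) ≤ c' * n with hP
  have hcard : (Nat.card {v // P v} : ℝ) = ((Finset.univ.filter P).card : ℝ) := by
    rw [Nat.card_eq_fintype_card, Fintype.card_subtype]
  rw [hcard]
  have key : ∀ v : Fin n → ZMod D, (∏ j, (if v j = 0 then (1:ℝ) else t)) =
      t ^ ((Finset.univ.filter fun j => v j ≠ 0).card) := by
    intro v
    rw [Finset.prod_ite, Finset.prod_const, Finset.prod_const, one_pow, one_mul]
  have step1 : ((Finset.univ.filter P).card : ℝ) * t ^ (c' * n) =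
      ∑ _v ∈ Finset.univ.filter P, t ^ (c' * n) := by
    rw [Finset.sum_const, nsmul_eq_mul]
  rw [step1]
  have step2 : (∑ _v ∈ Finset.univ.filter P, t ^ (c' * n)) ≤
      ∑ v ∈ Finset.univ.filter P, ∏ j, (if v j = 0 then (1:ℝ) else t) := by
    refine Finset.sum_le_sum fun v hv => ?_
    rw [key v]
    have hv' : ((Finset.univ.filter fun j => v j ≠ 0).card : ℝ) ≤ c' * n :=
      (Finset.mem_filter.mp hv).2
    calc t ^ (c' * n) ≤ t ^ (((Finset.univ.filter fun j => v j ≠ 0).card : ℕ) : ℝ) :=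
          Real.rpow_le_rpow_of_exponent_ge ht0 ht1 hv'
      _ = t ^ ((Finset.univ.filter fun j => v j ≠ 0).card) := Real.rpow_natCast t _
  refine step2.trans ?_
  have step3 : (∑ v ∈ Finset.univ.filter P, ∏ j, (if v j = 0 then (1:ℝ) else t)) ≤
      ∑ v : Fin n → ZMod D, ∏ j, (if v j = 0 then (1:ℝ) else t) := by
    refine Finset.sum_le_sum_of_subset_of_nonneg (Finset.filter_subset _ _) ?_
    intro v _ _
    exact Finset.prod_nonneg fun j _ => by split <;> [norm_num; exact ht0.le]
  refine step3.trans ?_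
  rw [sum_prod_pow (fun x : ZMod D => if x = 0 then (1:ℝ) else t)]
  have hsum : (∑ x : ZMod D, if x = 0 then (1:ℝ) else t) = 1 + ((D:ℝ) - 1) * t := by
    rw [Finset.sum_ite, Finset.sum_const, Finset.sum_const]
    have h1 : (Finset.univ.filter fun x : ZMod D => x = 0).card = 1 := by
      rw [Finset.filter_eq']
      simp
    have h2 : (Finset.univ.filter fun x : ZMod D => ¬ x = 0).card = D - 1 := by
      have := Finset.card_filter_add_card_filter_not
        (s := (Finset.univ : Finset (ZMod D))) (p := fun x => x = 0)
      rw [h1] at this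
      have hD : Fintype.card (ZMod D) = D := ZMod.card D
      simp only [Finset.card_univ, hD] at this
      omega
    rw [h1, h2]
    have hD1 : (1:ℕ) ≤ D := le_of_lt (Fact.out)
    push_cast [Nat.cast_sub hD1]
    ring_nf
    rw [Nat.cast_sub hD1]
    ring
  rw [hsum]


open Matrix Submodule Set

section Num
variable {D : ℕ} [Fact D.Prime]

lemma num_upper (n R : ℕ) (c' : ℝ) :
    Nat.card {M : Matrix (Fin n) (Fin n) (ZMod D) // M.rank = R ∧
        (∀ i, ((Finset.univ.filter fun j => M i j ≠ 0).card : ℝ) ≤ c' * n) ∧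
        (∀ j, ((Finset.univ.filter fun i => M i j ≠ 0).card : ℝ) ≤ c' * n)} ≤
      n ^ R * n ^ R *
        (Nat.card {v : Fin n → ZMod D //
          ((Finset.univ.filter fun j => v j ≠ 0).card : ℝ) ≤ c' * n}) ^ R *
        (Nat.card {v : Fin n → ZMod D //
          ((Finset.univ.filter fun j => v j ≠ 0).card : ℝ) ≤ c' * n}) ^ R := by
  classical
  set LW := {v : Fin n → ZMod D //
      ((Finset.univ.filter fun j => v j ≠ 0).card : ℝ) ≤ c' * n} with hLW
  set NT := {M : Matrix (Fin n) (Fin n) (ZMod D) // M.rank = R ∧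
      (∀ i, ((Finset.univ.filter fun j => M i j ≠ 0).card : ℝ) ≤ c' * n) ∧
      (∀ j, ((Finset.univ.filter fun i => M i j ≠ 0).card : ℝ) ≤ c' * n)} with hNT
  set T := ((Fin R → Fin n) × (Fin R → Fin n) × (Fin R → LW) × (Fin R → LW)) with hT
  have hcardT : Nat.card T = n ^ R * n ^ R *
      (Nat.card LW) ^ R * (Nat.card LW) ^ R := by
    rw [hT]
    simp only [Nat.card_eq_fintype_card, Fintype.card_prod, Fintype.card_fun, Fintype.card_fin]
    ring
  rw [← hcardT]
  -- decode function
  set dec : T → Matrix (Fin n) (Fin n) (ZMod D) := fun x =>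
    (Matrix.of fun i k => (x.2.2.2 k).1 i) *
      ((Matrix.of fun k j => (x.2.2.1 k).1 j).submatrix id x.2.1)⁻¹ *
      (Matrix.of fun k j => (x.2.2.1 k).1 j) with hdec
  have hex : ∀ x : NT, ∃ I J : Fin R → Fin n,
      x.1 = x.1.submatrix id J * (x.1.submatrix I J)⁻¹ * x.1.submatrix I id :=
    fun x => exists_reconstruction x.1 x.2.1
  set Φ : NT → T := fun x =>
    ⟨Classical.choose (hex x), Classical.choose (Classical.choose_spec (hex x)),
      fun k => ⟨fun j => x.1 (Classical.choose (hex x) k) j, x.2.2.1 _⟩,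
      fun k => ⟨fun i => x.1 i (Classical.choose (Classical.choose_spec (hex x)) k),
        x.2.2.2 _⟩⟩ with hΦ
  have hdecode : ∀ x : NT, dec (Φ x) = x.1 := by
    intro x
    have hspec := Classical.choose_spec (Classical.choose_spec (hex x))
    set I := Classical.choose (hex x)
    set J := Classical.choose (Classical.choose_spec (hex x))
    have h1 : (Matrix.of fun (k : Fin R) (j : Fin n) => x.1 (I k) j) = x.1.submatrix I id := rfl
    have h2 : (Matrix.of fun (i : Fin n) (k : Fin R) => x.1 i (J k)) = x.1.submatrix id J := rfl
    show (Matrix.of fun i k => x.1 i (J k)) *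
      ((Matrix.of fun k j => x.1 (I k) j).submatrix id J)⁻¹ *
      (Matrix.of fun k j => x.1 (I k) j) = x.1
    rw [h1, h2]
    have h3 : (x.1.submatrix I id).submatrix id J = x.1.submatrix I J := rfl
    rw [h3]
    exact hspec.symm
  have hinj : Function.Injective Φ := by
    intro x y hxy
    apply Subtype.ext
    rw [← hdecode x, ← hdecode y, hxy]
  exact Nat.card_le_card_of_injective Φ hinj
end Num


open Matrix Submodule Set

section Den
variable {D : ℕ} [Fact D.Prime]

lemma den_lower (n R : ℕ) (hR1 : 1 ≤ R) (hRn : R ≤ n) :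
    (D ^ (n-1)) ^ R * (D ^ R) ^ (n - R) ≤
      Nat.card {M : Matrix (Fin n) (Fin n) (ZMod D) // M.rank = R} := by
  classical
  set F := ZMod D
  haveI : Fact (1 < D) := ⟨(Fact.out (p := D.Prime)).one_lt⟩
  set S := {B : Fin R → (Fin n → F) // LinearIndependent F B} with hS
  set Ct := ({i : Fin n // R ≤ (i : ℕ)} → (Fin R → F)) with hCt
  -- the injection
  set ψ : S × Ct → Matrix (Fin n) (Fin n) F := fun x =>
    Matrix.of fun i j => if h : (i : ℕ) < R then x.1.1 ⟨i, h⟩ j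
      else ∑ k, x.2 ⟨i, not_lt.mp h⟩ k * x.1.1 k j with hψ
  have hrank : ∀ x : S × Ct, (ψ x).rank = R := by
    intro x
    set B := x.1.1 with hB
    set A : Matrix (Fin n) (Fin R) F := Matrix.of fun i k =>
      if h : (i : ℕ) < R then (if (⟨i, h⟩ : Fin R) = k then (1:F) else 0)
      else x.2 ⟨i, not_lt.mp h⟩ k with hA
    have hmul : ψ x = A * Matrix.of B := by
      ext i j
      rw [Matrix.mul_apply]
      by_cases h : (i : ℕ) < R
      · simp only [hψ, hA, Matrix.of_apply, dif_pos h]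
        have : ∀ k, (if (⟨i, h⟩ : Fin R) = k then (1:F) else 0) * B k j
            = if (⟨i, h⟩ : Fin R) = k then B k j else 0 := fun k => by split <;> simp
        rw [Finset.sum_congr rfl fun k _ => this k, Finset.sum_ite_eq]
        simp
        rfl
      · simp only [hψ, hA, Matrix.of_apply, dif_neg h]
        rfl
    refine le_antisymm ?_ ?_
    · rw [hmul]
      refine le_trans (Matrix.rank_mul_le_right A (Matrix.of B)) ?_
      refine le_trans (Matrix.rank_le_card_height (Matrix.of B)) ?_
      simp
    · have hsub : Submodule.span F (Set.range B) ≤ Submodule.span F (Set.range (ψ x)) := by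
        refine Submodule.span_mono ?_
        rintro v ⟨k, rfl⟩
        refine ⟨⟨(k : ℕ), lt_of_lt_of_le k.2 hRn⟩, ?_⟩
        funext j
        simp only [hψ, Matrix.of_apply, dif_pos k.2]
        rfl
      have h1 : Module.finrank F (Submodule.span F (Set.range B)) = R := by
        rw [finrank_span_eq_card x.1.2, Fintype.card_fin]
      rw [Matrix.rank_eq_finrank_span_row]
      calc R = Module.finrank F (Submodule.span F (Set.range B)) := h1.symm
        _ ≤ Module.finrank F (Submodule.span F (Set.range (ψ x))) :=
          Submodule.finrank_mono hsub
  have hinj : Function.Injective ψ := by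
    intro x y hxy
    have hBeq : x.1.1 = y.1.1 := by
      funext k j
      have h1 := congrFun (congrFun hxy ⟨(k : ℕ), lt_of_lt_of_le k.2 hRn⟩) j
      simpa [hψ, dif_pos k.2] using h1
    have hCeq : x.2 = y.2 := by
      funext i k
      have hi : ¬ ((i : ℕ) < R) := not_lt.mpr i.2
      have hsum : ∀ j, (∑ r, x.2 i r * x.1.1 r j) = ∑ r, y.2 i r * y.1.1 r j := by
        intro j
        have h1 := congrFun (congrFun hxy i.1) j
        simp only [hψ, Matrix.of_apply, dif_neg hi] at h1
        simpa using h1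
      have hzero : (∑ r, (x.2 i r - y.2 i r) • x.1.1 r) = 0 := by
        funext j
        simp only [Finset.sum_apply, Pi.smul_apply, smul_eq_mul, Pi.zero_apply, sub_mul]
        rw [Finset.sum_sub_distrib]
        rw [sub_eq_zero]
        rw [hBeq] at *
        exact hsum j
      have := Fintype.linearIndependent_iff.mp x.1.2 _ hzero k
      exact sub_eq_zero.mp this
    exact Prod.ext (Subtype.ext hBeq) hCeq
  -- cardinality computation
  have hle : Nat.card (S × Ct) ≤ Nat.card {M : Matrix (Fin n) (Fin n) F // M.rank = R} := by
    refine Nat.card_le_card_of_injective (fun x => ⟨ψ x, hrank x⟩) ?_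
    intro x y hxy
    exact hinj (congrArg Subtype.val hxy)
  refine le_trans ?_ hle
  rw [Nat.card_prod]
  have hq : Fintype.card F = D := ZMod.card D
  have hfinrank : Module.finrank F (Fin n → F) = n := by
    simp [Module.finrank_fintype_fun_eq_card]
  have hcardS : Nat.card S = ∏ i : Fin R, (D ^ n - D ^ (i : ℕ)) := by
    rw [hS, card_linearIndependent (by rw [hfinrank]; exact hRn)]
    simp [hq, hfinrank]
  have hSle : (D ^ (n-1)) ^ R ≤ Nat.card S := by
    rw [hcardS]
    calc (D ^ (n-1)) ^ R = ∏ _i : Fin R, D ^ (n-1) := by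
          rw [Finset.prod_const, Finset.card_univ, Fintype.card_fin]
      _ ≤ ∏ i : Fin R, (D ^ n - D ^ (i : ℕ)) := by
          refine Finset.prod_le_prod' ?_
          intro i _
          have hD2 : 2 ≤ D := (Fact.out (p := 1 < D))
          have hiR := i.2
          have hi : (i : ℕ) ≤ n - 1 := by omega
          have h1 : D ^ (i : ℕ) ≤ D ^ (n-1) := Nat.pow_le_pow_right (by omega) hi
          have h2 : 2 * D ^ (n-1) ≤ D ^ n := by
            have hDn : D ^ n = D * D ^ (n - 1) := by
              rw [← pow_succ']
              congr 1
              omega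
            calc 2 * D ^ (n-1) ≤ D * D ^ (n-1) := Nat.mul_le_mul_right _ hD2
              _ = D ^ n := hDn.symm
          omega
  have hcardCt : Nat.card Ct = (D ^ R) ^ (n - R) := by
    rw [hCt, Nat.card_eq_fintype_card, Fintype.card_fun]
    have e : {i : Fin n // R ≤ (i : ℕ)} ≃ Fin (n - R) :=
      { toFun := fun x => ⟨(x.1 : ℕ) - R, by have h1 := x.1.2; have h2 := x.2; omega⟩
        invFun := fun y => ⟨⟨(y : ℕ) + R, by have := y.2; omega⟩, Nat.le_add_left R y⟩
        left_inv := fun x => by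
          apply Subtype.ext; apply Fin.ext; have h1 := x.2; simp; omega
        right_inv := fun y => by apply Fin.ext; simp }
    rw [Fintype.card_congr e]
    congr 1
    · rw [Fintype.card_fun, hq, Fintype.card_fin]
    · exact Fintype.card_fin _
  calc (D ^ (n-1)) ^ R * (D ^ R) ^ (n - R) ≤ Nat.card S * Nat.card Ct :=
        Nat.mul_le_mul hSle (le_of_eq hcardCt.symm)
    _ ≤ _ := by rw [← Nat.card_prod]
end Den


open Matrix Finset


/-- For any `ε > 0` there is `c' > 0` such that for any `1 ≤ R ≤ n'`,
the probability that a uniformly random `n'×n'` matrix of rank `R` over `Z_D` has all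
row and column weights at most `c'n'` is `O(1)·D^{R² − 2(1−ε)n'R}`. -/
theorem uniform_low_weight_rank_R_prob
    {D : ℕ} [Fact D.Prime] (ε : ℝ) (hε : 0 < ε) :
    ∃ c' K : ℝ, 0 < c' ∧ 0 < K ∧ ∀ n' R : ℕ, 1 ≤ R → R ≤ n' →
      (Nat.card {M : Matrix (Fin n') (Fin n') (ZMod D) // M.rank = R ∧
          (∀ i, ((Finset.univ.filter fun j => M i j ≠ 0).card : ℝ) ≤ c' * n') ∧
          (∀ j, ((Finset.univ.filter fun i => M i j ≠ 0).card : ℝ) ≤ c' * n')} : ℝ) /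
        (Nat.card {M : Matrix (Fin n') (Fin n') (ZMod D) // M.rank = R} : ℝ) ≤
      K * (D : ℝ) ^ ((R : ℝ) ^ 2 - 2 * (1 - ε) * (n' : ℝ) * R) := by
  classical
  haveI hD1 : Fact (1 < D) := ⟨(Fact.out (p := D.Prime)).one_lt⟩
  have hD2 : (2 : ℕ) ≤ D := Fact.out (p := 1 < D)
  have hDR : (1 : ℝ) < (D : ℝ) := by exact_mod_cast hD2
  have hDR0 : (0 : ℝ) < (D : ℝ) := by linarith
  set lc : ℝ := Real.log 2 * ε with hlc_def
  have hlog2 : (0:ℝ) < Real.log 2 := Real.log_pos (by norm_num)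
  have hlc : 0 < lc := mul_pos hlog2 hε
  set c' : ℝ := min (lc / (4 * D)) (min ((lc / 8)^2) (1/2)) with hc'_def
  have hc0 : 0 < c' := by
    refine lt_min (by positivity) (lt_min (by positivity) (by norm_num))
  have hc_half : c' ≤ 1/2 := le_trans (min_le_right _ _) (min_le_right _ _)
  have hc1 : c' ≤ 1 := le_trans hc_half (by norm_num)
  have hcD : c' ≤ lc / (4 * D) := min_le_left _ _
  have hcsq : c' ≤ (lc / 8)^2 := le_trans (min_le_right _ _) (min_le_left _ _)
  set A : ℝ := (1 + ((D:ℝ) - 1) * c') * c' ^ (-c' : ℝ) with hA_def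
  have hA0 : 0 < A := by
    have h1 : (0:ℝ) < 1 + ((D:ℝ) - 1) * c' := by nlinarith
    have h2 : (0:ℝ) < c' ^ (-c' : ℝ) := Real.rpow_pos_of_pos hc0 _
    exact mul_pos h1 h2
  -- bound A ≤ exp (lc/2)
  have hAexp : A ≤ Real.exp (lc / 2) := by
    have hb1 : 1 + ((D:ℝ) - 1) * c' ≤ Real.exp (((D:ℝ) - 1) * c') := by
      have := Real.add_one_le_exp (((D:ℝ) - 1) * c')
      linarith
    have hb2 : c' ^ (-c' : ℝ) = Real.exp (-c' * Real.log c') := by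
      rw [Real.rpow_def_of_pos hc0, mul_comm]
    have hsqrt0 : 0 < Real.sqrt c' := Real.sqrt_pos.mpr hc0
    have hlogc : -c' * Real.log c' ≤ 2 * Real.sqrt c' := by
      have h1 : Real.log c' = 2 * Real.log (Real.sqrt c') := by
        conv_lhs => rw [← Real.sq_sqrt hc0.le]
        rw [Real.log_pow]
        norm_num
      have h2 : Real.log (Real.sqrt c')⁻¹ ≤ (Real.sqrt c')⁻¹ - 1 :=
        Real.log_le_sub_one_of_pos (by positivity)
      have h3 : -Real.log (Real.sqrt c') ≤ (Real.sqrt c')⁻¹ := by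
        rw [← Real.log_inv]
        linarith
      have h4 : c' * (Real.sqrt c')⁻¹ = Real.sqrt c' := by
        have hc'eq : c' = Real.sqrt c' * Real.sqrt c' := (Real.mul_self_sqrt hc0.le).symm
        rw [hc'eq]
        field_simp
        rw [Real.sqrt_sq hsqrt0.le]
      calc -c' * Real.log c' = 2 * (c' * (-Real.log (Real.sqrt c'))) := by rw [h1]; ring
        _ ≤ 2 * (c' * (Real.sqrt c')⁻¹) := by
            have := mul_le_mul_of_nonneg_left h3 hc0.le
            linarith
        _ = 2 * Real.sqrt c' := by rw [h4]
    have hDc : ((D:ℝ) - 1) * c' ≤ lc / 4 := by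
      have h1 : ((D:ℝ) - 1) * c' ≤ (D:ℝ) * c' := by nlinarith
      have h2 : (D:ℝ) * c' ≤ (D:ℝ) * (lc / (4 * D)) := mul_le_mul_of_nonneg_left hcD hDR0.le
      have h3 : (D:ℝ) * (lc / (4 * D)) = lc / 4 := by field_simp
      linarith
    have hsq : 2 * Real.sqrt c' ≤ lc / 4 := by
      have h1 : Real.sqrt c' ≤ Real.sqrt ((lc/8)^2) := Real.sqrt_le_sqrt hcsq
      have h2 : Real.sqrt ((lc/8)^2) = lc / 8 := Real.sqrt_sq (by positivity)
      rw [h2] at h1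
      linarith
    calc A ≤ Real.exp (((D:ℝ) - 1) * c') * Real.exp (-c' * Real.log c') := by
          rw [hA_def, hb2]
          exact mul_le_mul_of_nonneg_right hb1 (Real.exp_pos _).le
      _ = Real.exp (((D:ℝ) - 1) * c' + (-c' * Real.log c')) := (Real.exp_add _ _).symm
      _ ≤ Real.exp (lc / 4 + lc / 4) := by
          apply Real.exp_le_exp.mpr
          have := hlogc
          linarith
      _ = Real.exp (lc / 2) := by ring_nf
  have hADe : A < (D:ℝ) ^ (ε : ℝ) := by
    have h1 : (D:ℝ) ^ (ε : ℝ) = Real.exp (Real.log D * ε) := Real.rpow_def_of_pos hDR0 ε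
    have h2 : lc ≤ Real.log D * ε := by
      have := Real.log_le_log (by norm_num : (0:ℝ) < 2) (by exact_mod_cast hD2 : (2:ℝ) ≤ D)
      exact mul_le_mul_of_nonneg_right this hε.le
    have h3 : Real.exp (lc / 2) < Real.exp lc := Real.exp_lt_exp.mpr (by linarith)
    rw [h1]
    calc A ≤ Real.exp (lc/2) := hAexp
      _ < Real.exp lc := h3
      _ ≤ Real.exp (Real.log D * ε) := Real.exp_le_exp.mpr h2
  set B1 : ℝ := ((D:ℝ) ^ (2 * ε : ℝ)) / A ^ 2 with hB1_def
  have hB1 : 1 < B1 := by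
    rw [hB1_def, lt_div_iff₀ (by positivity), one_mul]
    have : (D:ℝ) ^ (2 * ε : ℝ) = ((D:ℝ) ^ (ε:ℝ)) ^ 2 := by
      rw [← Real.rpow_natCast ((D:ℝ) ^ (ε:ℝ)) 2, ← Real.rpow_mul hDR0.le]
      norm_num
      ring_nf
    rw [this]
    exact pow_lt_pow_left₀ hADe hA0.le (by norm_num)
  obtain ⟨n₀, hn₀⟩ : ∃ n₀ : ℕ, ∀ n ≥ n₀, ((n:ℝ))^2 / B1 ^ n < 1 / D := by
    have ht := tendsto_pow_const_div_const_pow_of_one_lt 2 hB1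
    have hev := ht.eventually_lt_const (by positivity : (0:ℝ) < 1 / D)
    exact Filter.eventually_atTop.mp hev
  set K : ℝ := (D:ℝ) ^ (2 * (n₀:ℝ)^2) with hK_def
  have hK1 : 1 ≤ K := by
    rw [hK_def, ← Real.rpow_zero (D:ℝ)]
    exact Real.rpow_le_rpow_of_exponent_le hDR.le (by positivity)
  refine ⟨c', K, hc0, by linarith, ?_⟩
  intro n R hR1 hRn
  have hn1 : 1 ≤ n := le_trans hR1 hRn
  set N : ℕ := Nat.card {v : Fin n → ZMod D //
      ((Finset.univ.filter fun j => v j ≠ 0).card : ℝ) ≤ c' * n} with hN_def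
  set num : ℕ := Nat.card {M : Matrix (Fin n) (Fin n) (ZMod D) // M.rank = R ∧
      (∀ i, ((Finset.univ.filter fun j => M i j ≠ 0).card : ℝ) ≤ c' * n) ∧
      (∀ j, ((Finset.univ.filter fun i => M i j ≠ 0).card : ℝ) ≤ c' * n)} with hnum_def
  set den : ℕ := Nat.card {M : Matrix (Fin n) (Fin n) (ZMod D) // M.rank = R} with hden_def
  have hden_lb := den_lower (D := D) n R hR1 hRn
  have hden_pos : 0 < den := lt_of_lt_of_le (by positivity) hden_lb
  have hnum_le_den : num ≤ den := by
    refine Nat.card_le_card_of_injective (fun x => ⟨x.1, x.2.1⟩) ?_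
    intro x y h
    exact Subtype.ext (by simpa using congrArg Subtype.val h)
  have hdenR : (0:ℝ) < (den:ℝ) := by exact_mod_cast hden_pos
  set e : ℝ := (R:ℝ)^2 - 2*(1-ε)*(n:ℝ)*R with he_def
  have hDe_pos : (0:ℝ) < (D:ℝ) ^ e := Real.rpow_pos_of_pos hDR0 e
  have hNpos : (0:ℝ) ≤ (N:ℝ) := Nat.cast_nonneg N
  by_cases hn : n₀ ≤ n
  · -- large n
    suffices h : (num:ℝ)/den ≤ (D:ℝ) ^ e by
      exact h.trans (le_mul_of_one_le_left hDe_pos.le hK1)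
    rw [div_le_iff₀ hdenR]
    -- bound on N
    have hNb : (N:ℝ) ≤ A ^ n := by
      have h0 := lw_card_bound (D := D) n c' c' hc0 hc1 hc0.le
      have hpow : (0:ℝ) < c' ^ (c' * (n:ℝ)) := Real.rpow_pos_of_pos hc0 _
      rw [← le_div_iff₀ hpow] at h0
      have hAn : A ^ n = (1 + ((D:ℝ)-1)*c') ^ n / c' ^ (c' * (n:ℝ)) := by
        rw [hA_def, mul_pow, div_eq_mul_inv]
        congr 1
        rw [← Real.rpow_natCast (c' ^ (-c' : ℝ)) n, ← Real.rpow_mul hc0.le,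
          ← Real.rpow_neg hc0.le]
        congr 1
        ring
      rw [hAn]
      exact h0
    -- key scalar inequality
    have h1 : (n:ℝ)^2 * D ≤ B1 ^ n := by
      have := hn₀ n hn
      rw [div_lt_div_iff₀ (by positivity) hDR0] at this
      · linarith
    have hA2 : B1 * A^2 = (D:ℝ) ^ (2*ε : ℝ) := by
      rw [hB1_def]
      field_simp
    have hkey : (n:ℝ)^2 * (N:ℝ)^2 * D ≤ ((D:ℝ) ^ (2*ε : ℝ)) ^ n := by
      calc (n:ℝ)^2 * (N:ℝ)^2 * D = ((n:ℝ)^2 * D) * (N:ℝ)^2 := by ring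
        _ ≤ B1 ^ n * (A^2)^n := by
            refine mul_le_mul h1 ?_ (by positivity) (by positivity)
            calc (N:ℝ)^2 ≤ (A^n)^2 := pow_le_pow_left₀ hNpos hNb 2
              _ = (A^2)^n := pow_right_comm A n 2
        _ = (B1 * A^2) ^ n := (mul_pow _ _ _).symm
        _ = ((D:ℝ) ^ (2*ε : ℝ)) ^ n := by rw [hA2]
    have hstep : (n:ℝ)^2 * (N:ℝ)^2 ≤ (D:ℝ) ^ (2*ε*(n:ℝ) - 1) := by
      have hd : (D:ℝ) ^ (2*ε*(n:ℝ) - 1) = ((D:ℝ) ^ (2*ε : ℝ)) ^ n / D := by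
        rw [Real.rpow_sub hDR0, Real.rpow_one]
        congr 1
        rw [← Real.rpow_natCast ((D:ℝ) ^ (2*ε : ℝ)) n, ← Real.rpow_mul hDR0.le]
      rw [hd, le_div_iff₀ hDR0]
      exact hkey
    have hnum_cast : (num:ℝ) ≤ ((n:ℝ)^2 * (N:ℝ)^2) ^ R := by
      have h2 := num_upper (D := D) n R c'
      have h3 : (num:ℝ) ≤ ((n ^ R * n ^ R * N ^ R * N ^ R : ℕ) : ℝ) := by
        exact_mod_cast h2
      refine h3.trans (le_of_eq ?_)
      push_cast
      ring
    have hmain : (num:ℝ) ≤ (D:ℝ) ^ ((2*ε*(n:ℝ) - 1) * R) := by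
      refine hnum_cast.trans ?_
      calc ((n:ℝ)^2 * (N:ℝ)^2) ^ R ≤ ((D:ℝ) ^ (2*ε*(n:ℝ) - 1)) ^ R :=
            pow_le_pow_left₀ (by positivity) hstep R
        _ = (D:ℝ) ^ ((2*ε*(n:ℝ) - 1) * R) := by
            rw [← Real.rpow_natCast ((D:ℝ) ^ (2*ε*(n:ℝ) - 1)) R, ← Real.rpow_mul hDR0.le]
    -- denominator in real form
    set m : ℕ := (n-1)*R + R*(n-R) with hm_def
    have hden_real : (D:ℝ) ^ ((m:ℕ):ℝ) ≤ (den:ℝ) := by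
      have h4 : ((D ^ (n-1)) ^ R * (D ^ R) ^ (n - R) : ℕ) = D ^ m := by
        rw [hm_def, pow_add, ← pow_mul, ← pow_mul]
      have h5 : ((D ^ m : ℕ) : ℝ) ≤ (den:ℝ) := by
        exact_mod_cast h4 ▸ hden_lb
      rw [Real.rpow_natCast]
      exact_mod_cast h5
    have hexp : (2*ε*(n:ℝ) - 1) * R = e + ((m:ℕ):ℝ) := by
      rw [he_def, hm_def]
      push_cast [Nat.cast_sub hn1, Nat.cast_sub hRn]
      ring
    calc (num:ℝ) ≤ (D:ℝ) ^ ((2*ε*(n:ℝ) - 1) * R) := hmain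
      _ = (D:ℝ) ^ e * (D:ℝ) ^ ((m:ℕ):ℝ) := by rw [hexp, Real.rpow_add hDR0]
      _ ≤ (D:ℝ) ^ e * den := mul_le_mul_of_nonneg_left hden_real hDe_pos.le
  · -- small n
    push_neg at hn
    have hratio : (num:ℝ)/den ≤ 1 := by
      rw [div_le_one hdenR]
      exact_mod_cast hnum_le_den
    refine hratio.trans ?_
    rw [hK_def, ← Real.rpow_add hDR0]
    rw [show (1:ℝ) = (D:ℝ) ^ (0:ℝ) from (Real.rpow_zero _).symm]
    refine Real.rpow_le_rpow_of_exponent_le hDR.le ?_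
    have hv1 : (R:ℝ) ≤ (n:ℝ) := by exact_mod_cast hRn
    have hv2 : (n:ℝ) ≤ (n₀:ℝ) := by exact_mod_cast hn.le
    have hv3 : (0:ℝ) ≤ (R:ℝ) := Nat.cast_nonneg R
    have hv4 : (0:ℝ) ≤ (n:ℝ) := Nat.cast_nonneg n
    have hv5 : (0:ℝ) ≤ (n₀:ℝ) := Nat.cast_nonneg n₀
    have hnR : (n:ℝ) * R ≤ (n₀:ℝ)^2 := by
      rw [sq]
      exact mul_le_mul hv2 (hv1.trans hv2) hv3 hv5
    have he_lb : -(2 * (n₀:ℝ)^2) ≤ e := by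
      rw [he_def]
      have hid : (R:ℝ)^2 - 2*(1-ε)*(n:ℝ)*R
          = (R:ℝ)^2 + 2*(ε*((n:ℝ)*R)) - 2*((n:ℝ)*R) := by ring
      rw [hid]
      have hY : (0:ℝ) ≤ ε*((n:ℝ)*R) := mul_nonneg hε.le (mul_nonneg hv4 hv3)
      have hX : (0:ℝ) ≤ (R:ℝ)^2 := sq_nonneg _
      linarith
    linarith
end
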